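/- Let w ∈ ℂ with Re w > 0 and let θ ∈ ℂ with |θ| = 1 and θ ≠ 1. Then there exists an entire function F : ℂ → ℂ such that for all s ∈ ℂ with Re s > 1, F(s) = Σ_{n=0}^∞ θⁿ (n+w)^{−s}. (Holomorphic continuation of the Lerch zeta function ζ(s,a,w) = Σ_{n=0}^∞ e^{2πina}(n+w)^{−s} with nonintegral twist a, i.e. θ = e^{2πia} ≠ 1, and complex shift w with positive real part.) -/

import Mathlib

open Complex

/-- Iterated forward difference (in the shift variable) of `x ↦ (x+w)^(-s)`. -/
noncomputable def lerchG (w : ℂ) : ℕ → ℝ → ℂ → ℂ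
  | 0 => fun x s => ((x : ℂ) + w) ^ (-s)
  | (k+1) => fun x s => lerchG w k x s - lerchG w k (x+1) s

/-- Bounding constant for `lerchG`. -/
noncomputable def lerchA : ℕ → ℂ → ℝ
  | 0 => fun s => Real.exp (Real.pi * ‖s‖)
  | (k+1) => fun s => ‖s‖ * lerchA k (s+1)

lemma lerchA_nonneg (k : ℕ) (s : ℂ) : 0 ≤ lerchA k s := by
  induction k generalizing s with
  | zero => exact (Real.exp_pos _).le
  | succ k ih => exact mul_nonneg (norm_nonneg s) (ih _)

lemma lerchA_le (k : ℕ) (s : ℂ) :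
    lerchA k s ≤ (‖s‖ + k) ^ k * Real.exp (Real.pi * (‖s‖ + k)) := by
  induction k generalizing s with
  | zero => simp [lerchA]
  | succ k ih =>
    have h1 : ‖s + 1‖ ≤ ‖s‖ + 1 := by simpa using norm_add_le s 1
    have h2 : lerchA (k+1) s = ‖s‖ * lerchA k (s+1) := rfl
    have hns : (0:ℝ) ≤ ‖s‖ := norm_nonneg s
    have hπ := Real.pi_nonneg
    rw [h2]
    calc ‖s‖ * lerchA k (s+1)
        ≤ ‖s‖ * ((‖s+1‖ + k) ^ k * Real.exp (Real.pi * (‖s+1‖ + k))) :=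
          mul_le_mul_of_nonneg_left (ih _) hns
      _ ≤ (‖s‖ + ((k:ℝ)+1)) * ((‖s‖ + ((k:ℝ)+1)) ^ k * Real.exp (Real.pi * (‖s‖ + ((k:ℝ)+1)))) := by
          have hb : ‖s+1‖ + (k:ℝ) ≤ ‖s‖ + ((k:ℝ)+1) := by linarith
          have hb0 : (0:ℝ) ≤ ‖s+1‖ + (k:ℝ) := by positivity
          have h3 : (‖s+1‖ + (k:ℝ)) ^ k ≤ (‖s‖ + ((k:ℝ)+1)) ^ k := pow_le_pow_left₀ hb0 hb k
          have h4 : Real.exp (Real.pi * (‖s+1‖ + k)) ≤ Real.exp (Real.pi * (‖s‖ + ((k:ℝ)+1))) := by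
            apply Real.exp_le_exp.2; nlinarith
          have h5 : ‖s‖ ≤ ‖s‖ + ((k:ℝ)+1) := by linarith
          apply mul_le_mul h5 (mul_le_mul h3 h4 (Real.exp_pos _).le (by positivity))
            (by positivity) (by positivity)
      _ = (‖s‖ + ((k:ℕ)+1:ℕ)) ^ (k+1) * Real.exp (Real.pi * (‖s‖ + ((k:ℕ)+1:ℕ))) := by
          push_cast; ring

lemma lerch_base_ne_zero (w : ℂ) (hw : 0 < w.re) {x : ℝ} (hx : 0 ≤ x) : ((x:ℂ) + w) ≠ 0 := by
  intro h
  have := congrArg Complex.re h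
  simp [Complex.add_re] at this
  linarith

lemma lerchG_differentiable (w : ℂ) (hw : 0 < w.re) (k : ℕ) {x : ℝ} (hx : 0 ≤ x) :
    Differentiable ℂ (fun s => lerchG w k x s) := by
  induction k generalizing x with
  | zero =>
    have h0 : ((x:ℂ) + w) ≠ 0 := lerch_base_ne_zero w hw hx
    have : Differentiable ℂ (fun s : ℂ => ((x:ℂ) + w) ^ (-s)) :=
      (differentiable_id.neg).const_cpow (Or.inl h0)
    simpa [lerchG] using this
  | succ k ih =>
    have := (ih hx).sub (ih (x := x+1) (by linarith))
    exact this

lemma lerchG_hasDerivAt (w : ℂ) (hw : 0 < w.re) (k : ℕ) (s : ℂ) {x : ℝ} (hx : 0 ≤ x) :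
    HasDerivAt (fun x : ℝ => lerchG w k x s) (-(s * lerchG w k x (s+1))) x := by
  induction k generalizing s x with
  | zero =>
    have hmem : ((x:ℂ) + w) ∈ Complex.slitPlane := by
      apply Complex.mem_slitPlane_iff.2
      left; simp only [Complex.add_re, Complex.ofReal_re]; linarith
    have hC : HasDerivAt (fun z : ℂ => (z + w) ^ (-s)) (-s * (((x:ℝ):ℂ) + w) ^ (-s-1) * 1)
        ((x:ℝ):ℂ) :=
      HasDerivAt.cpow_const ((hasDerivAt_id _).add_const w) hmem
    have hR := hC.comp_ofReal
    have hexp : -(s+1) = -s - 1 := by ring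
    have heq : -(s * lerchG w 0 x (s+1)) = -s * ((x:ℂ) + w) ^ (-s-1) * 1 := by
      simp only [lerchG, hexp]; ring
    rw [heq]
    exact hR
  | succ k ih =>
    have h1 : HasDerivAt (fun x : ℝ => lerchG w k (x+1) s) (-(s * lerchG w k (x+1) (s+1))) x :=
      HasDerivAt.comp_add_const x 1 (ih (s := s) (x := x+1) (by linarith))
    have h3 := (ih (s := s) hx).sub h1
    have heq : -(s * lerchG w (k+1) x (s+1)) =
        -(s * lerchG w k x (s+1)) - -(s * lerchG w k (x+1) (s+1)) := by
      simp only [lerchG]; ring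
    rw [heq]
    exact h3

set_option maxHeartbeats 1000000 in
lemma lerchG_norm_le (w : ℂ) (hw : 0 < w.re) (k : ℕ) (s : ℂ) {x : ℝ}
    (hx : 0 ≤ x) (hs : 0 ≤ s.re + k) :
    ‖lerchG w k x s‖ ≤ lerchA k s * (x + w.re) ^ (-(s.re + k)) := by
  induction k generalizing s x with
  | zero =>
    have hxw : (0:ℝ) < x + w.re := by linarith
    have hz : ((x:ℂ) + w) ≠ 0 := lerch_base_ne_zero w hw hx
    have hre : x + w.re ≤ ‖(x:ℂ) + w‖ := by
      calc x + w.re = ((x:ℂ) + w).re := by simp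
        _ ≤ ‖(x:ℂ) + w‖ := Complex.re_le_norm _
    have hs0 : (0:ℝ) ≤ s.re := by simpa using hs
    have habs : ‖((x:ℂ) + w) ^ (-s)‖
        = ‖(x:ℂ) + w‖ ^ (-s.re) * Real.exp (Complex.arg ((x:ℂ)+w) * s.im) := by
      rw [Complex.norm_cpow_of_ne_zero hz]
      simp only [Complex.neg_re, Complex.neg_im]
      rw [mul_neg, Real.exp_neg, div_eq_mul_inv, inv_inv]
    have h1 : ‖(x:ℂ) + w‖ ^ (-s.re) ≤ (x + w.re) ^ (-s.re) :=
      Real.rpow_le_rpow_of_nonpos hxw hre (by linarith)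
    have h2 : Real.exp (Complex.arg ((x:ℂ)+w) * s.im) ≤ Real.exp (Real.pi * ‖s‖) := by
      apply Real.exp_le_exp.2
      calc Complex.arg ((x:ℂ)+w) * s.im ≤ |Complex.arg ((x:ℂ)+w) * s.im| := le_abs_self _
        _ = |Complex.arg ((x:ℂ)+w)| * |s.im| := abs_mul _ _
        _ ≤ Real.pi * ‖s‖ := by
            apply mul_le_mul (Complex.abs_arg_le_pi _) _ (abs_nonneg _) Real.pi_nonneg
            exact (Complex.abs_im_le_norm s)
    calc ‖lerchG w 0 x s‖ = ‖((x:ℂ) + w) ^ (-s)‖ := by rw [lerchG]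
      _ = ‖(x:ℂ) + w‖ ^ (-s.re) * Real.exp (Complex.arg ((x:ℂ)+w) * s.im) := habs
      _ ≤ (x + w.re) ^ (-s.re) * Real.exp (Real.pi * ‖s‖) := by
          apply mul_le_mul h1 h2 (Real.exp_pos _).le (Real.rpow_nonneg hxw.le _)
      _ = lerchA 0 s * (x + w.re) ^ (-(s.re + (0:ℕ))) := by
          rw [lerchA]; push_cast; rw [add_zero]; ring
  | succ k ih =>
    have hxw : (0:ℝ) < x + w.re := by linarith
    have hp : (0:ℝ) ≤ s.re + ((k:ℕ)+1:ℕ) := by push_cast at hs ⊢; linarith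
    have hD : ∀ t ∈ Set.Icc x (x+1), HasDerivWithinAt (fun t => lerchG w k t s)
        (-(s * lerchG w k t (s+1))) (Set.Icc x (x+1)) t :=
      fun t ht => (lerchG_hasDerivAt w hw k s (le_trans hx ht.1)).hasDerivWithinAt
    have hB : ∀ t ∈ Set.Icc x (x+1), ‖-(s * lerchG w k t (s+1))‖
        ≤ ‖s‖ * (lerchA k (s+1) * (x + w.re) ^ (-(s.re + ((k:ℕ)+1:ℕ)))) := by
      intro t ht
      have hxt : (0:ℝ) ≤ t := le_trans hx ht.1
      have hexp : ((s+1).re + (k:ℝ)) = s.re + ((k:ℕ)+1:ℕ) := by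
        simp [Complex.add_re]; push_cast; ring
      have hih : ‖lerchG w k t (s+1)‖
          ≤ lerchA k (s+1) * (t + w.re) ^ (-(s.re + ((k:ℕ)+1:ℕ))) := by
        have h := ih (s := s+1) hxt (by rw [hexp]; exact hp)
        rwa [hexp] at h
      have hmono : (t + w.re) ^ (-(s.re + ((k:ℕ)+1:ℕ)))
          ≤ (x + w.re) ^ (-(s.re + ((k:ℕ)+1:ℕ))) :=
        Real.rpow_le_rpow_of_nonpos hxw (by linarith [ht.1]) (neg_nonpos.2 hp)
      rw [norm_neg, norm_mul]
      apply mul_le_mul_of_nonneg_left _ (norm_nonneg s)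
      calc ‖lerchG w k t (s+1)‖
          ≤ lerchA k (s+1) * (t + w.re) ^ (-(s.re + ((k:ℕ)+1:ℕ))) := hih
        _ ≤ lerchA k (s+1) * (x + w.re) ^ (-(s.re + ((k:ℕ)+1:ℕ))) :=
            mul_le_mul_of_nonneg_left hmono (lerchA_nonneg _ _)
    have hmvt := Convex.norm_image_sub_le_of_norm_hasDerivWithin_le hD hB (convex_Icc x (x+1))
      (Set.mem_Icc.2 ⟨le_refl x, by linarith⟩) (Set.mem_Icc.2 ⟨by linarith, le_refl (x+1)⟩)
    have hone : ‖(x+1) - x‖ = 1 := by simp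
    rw [hone, mul_one] at hmvt
    calc ‖lerchG w (k+1) x s‖ = ‖lerchG w k (x+1) s - lerchG w k x s‖ := by
          rw [lerchG, norm_sub_rev]
      _ ≤ ‖s‖ * (lerchA k (s+1) * (x + w.re) ^ (-(s.re + ((k:ℕ)+1:ℕ)))) := hmvt
      _ = lerchA (k+1) s * (x + w.re) ^ (-(s.re + ((k:ℕ)+1:ℕ))) := by
          rw [lerchA]; ring

lemma lerchG_summable (w : ℂ) (hw : 0 < w.re) (θ : ℂ) (hθ : ‖θ‖ = 1) (k : ℕ) (s : ℂ)
    (hs : 1 < s.re + k) :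
    Summable (fun n : ℕ => θ ^ n * lerchG w k n s) := by
  apply Summable.of_norm
  have hbd : ∀ n : ℕ, ‖θ ^ n * lerchG w k n s‖ ≤ lerchA k s * ((n:ℝ) + w.re) ^ (-(s.re + k)) := by
    intro n
    rw [norm_mul, norm_pow, hθ, one_pow, one_mul]
    exact lerchG_norm_le w hw k s n.cast_nonneg (by linarith)
  apply Summable.of_nonneg_of_le (fun n => norm_nonneg _) hbd
  apply Summable.mul_left
  have hsum := (Real.summable_one_div_nat_add_rpow w.re (s.re + k)).2 hs
  refine hsum.congr fun n => ?_
  have hpos : (0:ℝ) < (n:ℝ) + w.re := by positivity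
  rw [abs_of_pos hpos, one_div, ← Real.rpow_neg hpos.le]

/-- The `k`-th stage of the analytic continuation. -/
noncomputable def lerchF (w θ : ℂ) (k : ℕ) (s : ℂ) : ℂ :=
  (∑ j ∈ Finset.range k, (-θ / (1-θ))^j / (1-θ) * lerchG w j 0 s)
    + (-θ/(1-θ))^k * ∑' n : ℕ, θ^n * lerchG w k n s

set_option maxHeartbeats 1000000 in
lemma lerchF_succ (w : ℂ) (hw : 0 < w.re) (θ : ℂ) (hθ : ‖θ‖ = 1) (hθ1 : θ ≠ 1)
    (k : ℕ) (s : ℂ) (hs : 1 < s.re + k) :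
    lerchF w θ k s = lerchF w θ (k+1) s := by
  have h1θ : (1:ℂ) - θ ≠ 0 := sub_ne_zero.2 (Ne.symm hθ1)
  have hθ0 : θ ≠ 0 := by
    intro h; rw [h] at hθ; simp at hθ
  have hA : Summable (fun n : ℕ => θ^n * lerchG w k n s) := lerchG_summable w hw θ hθ k s hs
  have hA1 : Summable (fun n : ℕ => θ^(n+1) * lerchG w k ((n:ℝ)+1) s) := by
    have h := (summable_nat_add_iff (f := fun n : ℕ => θ^n * lerchG w k n s) 1).2 hA
    refine h.congr fun n => ?_
    push_cast
    ring_nf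
  have hB : Summable (fun n : ℕ => θ^n * lerchG w k ((n:ℝ)+1) s) := by
    refine (hA1.mul_left θ⁻¹).congr fun n => ?_
    field_simp [pow_succ]
    ring
  have hC : (∑' n : ℕ, θ^n * lerchG w (k+1) n s)
      = (∑' n : ℕ, θ^n * lerchG w k n s) - ∑' n : ℕ, θ^n * lerchG w k ((n:ℝ)+1) s := by
    rw [← Summable.tsum_sub hA hB]
    refine tsum_congr fun n => ?_
    have hg : lerchG w (k+1) (n:ℝ) s = lerchG w k (n:ℝ) s - lerchG w k ((n:ℝ)+1) s := by
      simp [lerchG]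
    rw [hg]; ring
  have hzero : (∑' n : ℕ, θ^n * lerchG w k n s)
      = lerchG w k 0 s + ∑' n : ℕ, θ^(n+1) * lerchG w k ((n:ℝ)+1) s := by
    rw [Summable.tsum_eq_zero_add hA]
    congr 1
    · simp
    · refine tsum_congr fun n => ?_
      push_cast
      ring_nf
  have hB2 : θ * ∑' n : ℕ, θ^n * lerchG w k ((n:ℝ)+1) s
      = ∑' n : ℕ, θ^(n+1) * lerchG w k ((n:ℝ)+1) s := by
    rw [← tsum_mul_left]
    exact tsum_congr fun n => by ring
  have h2 : (∑' n : ℕ, θ^n * lerchG w k n s)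
      = lerchG w k 0 s + θ * ∑' n : ℕ, θ^n * lerchG w k ((n:ℝ)+1) s := by
    rw [hB2]; exact hzero
  have key : (∑' n : ℕ, θ^n * lerchG w k n s) * (1-θ)
      = lerchG w k 0 s + (-θ) * ∑' n : ℕ, θ^n * lerchG w (k+1) n s := by
    rw [hC]; linear_combination h2
  have hABC : (∑' n : ℕ, θ^n * lerchG w k n s)
      = lerchG w k 0 s / (1-θ) + (-θ/(1-θ)) * ∑' n : ℕ, θ^n * lerchG w (k+1) n s := by
    calc (∑' n : ℕ, θ^n * lerchG w k n s)
        = (lerchG w k 0 s + (-θ) * ∑' n : ℕ, θ^n * lerchG w (k+1) n s)/(1-θ) := by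
          rw [eq_div_iff h1θ]; exact key
      _ = lerchG w k 0 s / (1-θ) + (-θ/(1-θ)) * ∑' n : ℕ, θ^n * lerchG w (k+1) n s := by
          ring
  unfold lerchF
  rw [Finset.sum_range_succ, hABC]
  ring

lemma lerchF_eq (w : ℂ) (hw : 0 < w.re) (θ : ℂ) (hθ : ‖θ‖ = 1) (hθ1 : θ ≠ 1)
    {j k : ℕ} (hjk : j ≤ k) (s : ℂ) (hs : 1 < s.re + j) :
    lerchF w θ j s = lerchF w θ k s := by
  induction k with
  | zero =>
    obtain rfl : j = 0 := Nat.le_zero.1 hjk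
    rfl
  | succ k ih =>
    rcases Nat.lt_or_ge j (k+1) with h | h
    · have hj : j ≤ k := Nat.lt_succ_iff.1 h
      have hsk : 1 < s.re + k := by
        have : (j:ℝ) ≤ k := Nat.cast_le.2 hj
        linarith
      rw [ih hj, lerchF_succ w hw θ hθ hθ1 k s hsk]
    · obtain rfl : j = k+1 := le_antisymm hjk h
      rfl

set_option maxHeartbeats 1000000 in
lemma lerchF_tsum_diffOn (w : ℂ) (hw : 0 < w.re) (θ : ℂ) (hθ : ‖θ‖ = 1) (k : ℕ)
    (σ R : ℝ) (hσ : 1 < σ + k) :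
    DifferentiableOn ℂ (fun s => ∑' n : ℕ, θ^n * lerchG w k n s)
      ({s : ℂ | σ < s.re} ∩ {s : ℂ | ‖s‖ < R}) := by
  have hopen : IsOpen ({s : ℂ | σ < s.re} ∩ {s : ℂ | ‖s‖ < R}) :=
    (isOpen_lt continuous_const Complex.continuous_re).inter
      (isOpen_lt continuous_norm continuous_const)
  have hs1 : Summable (fun n : ℕ => (n:ℝ) ^ (-(σ + k))) :=
    Real.summable_nat_rpow.2 (by linarith)
  have hv : Summable (fun n : ℕ => (if n = 0 then (w.re ^ (-(σ + k)) + w.re ^ (-(R + k)))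
      else (n:ℝ) ^ (-(σ + k)))) := by
    apply (summable_nat_add_iff 1).1
    have h := (summable_nat_add_iff (f := fun n : ℕ => (n:ℝ) ^ (-(σ + k))) 1).2 hs1
    refine h.congr fun n => ?_
    simp
  refine differentiableOn_tsum_of_summable_norm (hv.mul_left ((R + k)^k * Real.exp (Real.pi * (R + k))))
    (fun n => ((lerchG_differentiable w hw k (n.cast_nonneg)).const_mul _).differentiableOn)
    hopen ?_
  intro n s hsV
  obtain ⟨hre, hnorm⟩ := hsV
  have hre : σ < s.re := hre
  have hnorm : ‖s‖ < R := hnorm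
  have hreR : s.re < R := lt_of_le_of_lt (by exact Complex.re_le_norm s) hnorm
  have hRk : (0:ℝ) ≤ R + k := by
    have := norm_nonneg s
    have : (0:ℝ) ≤ (k:ℝ) := Nat.cast_nonneg k
    linarith [norm_nonneg s]
  have hCm0 : (0:ℝ) ≤ (R + k)^k * Real.exp (Real.pi * (R + k)) := by positivity
  have hsk : (0:ℝ) ≤ s.re + k := by linarith
  have h1 : ‖θ^n * lerchG w k n s‖ ≤ lerchA k s * ((n:ℝ) + w.re) ^ (-(s.re + k)) := by
    rw [norm_mul, norm_pow, hθ, one_pow, one_mul]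
    exact lerchG_norm_le w hw k s n.cast_nonneg hsk
  have hAC : lerchA k s ≤ (R + k)^k * Real.exp (Real.pi * (R + k)) := by
    calc lerchA k s ≤ (‖s‖ + k)^k * Real.exp (Real.pi * (‖s‖ + k)) := lerchA_le k s
      _ ≤ (R + k)^k * Real.exp (Real.pi * (R + k)) := by
        have hb0 : (0:ℝ) ≤ ‖s‖ + k := by positivity
        have hb : ‖s‖ + (k:ℝ) ≤ R + k := by linarith
        apply mul_le_mul (pow_le_pow_left₀ hb0 hb k)
          (Real.exp_le_exp.2 (by nlinarith [Real.pi_nonneg])) (Real.exp_pos _).le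
          (by positivity)
  rcases Nat.eq_zero_or_pos n with rfl | hn
  · simp only [if_pos rfl]
    calc ‖θ^0 * lerchG w k (((0:ℕ):ℝ)) s‖ ≤ lerchA k s * (((0:ℕ):ℝ) + w.re) ^ (-(s.re + k)) := h1
      _ ≤ ((R + k)^k * Real.exp (Real.pi * (R + k)))
          * (w.re ^ (-(σ + k)) + w.re ^ (-(R + k))) := by
          rw [show ((0:ℕ):ℝ) + w.re = w.re by norm_num]
          apply mul_le_mul hAC _ (Real.rpow_nonneg hw.le _) hCm0
          rcases le_or_gt 1 w.re with hw1 | hw1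
          · calc w.re ^ (-(s.re + k)) ≤ w.re ^ (-(σ + k)) :=
                Real.rpow_le_rpow_of_exponent_le hw1 (by linarith)
              _ ≤ w.re ^ (-(σ + k)) + w.re ^ (-(R + k)) :=
                le_add_of_nonneg_right (Real.rpow_nonneg hw.le _)
          · calc w.re ^ (-(s.re + k)) ≤ w.re ^ (-(R + k)) :=
                Real.rpow_le_rpow_of_exponent_ge hw hw1.le (by linarith)
              _ ≤ w.re ^ (-(σ + k)) + w.re ^ (-(R + k)) :=
                le_add_of_nonneg_left (Real.rpow_nonneg hw.le _)
  · have hn0 : n ≠ 0 := hn.ne'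
    simp only [if_neg hn0]
    have hn1 : (1:ℝ) ≤ (n:ℝ) := by exact_mod_cast hn
    have hb1 : (1:ℝ) ≤ (n:ℝ) + w.re := by linarith
    calc ‖θ^n * lerchG w k n s‖ ≤ lerchA k s * ((n:ℝ) + w.re) ^ (-(s.re + k)) := h1
      _ ≤ ((R + k)^k * Real.exp (Real.pi * (R + k))) * ((n:ℝ)) ^ (-(σ + k)) := by
          apply mul_le_mul hAC _ (Real.rpow_nonneg (by positivity) _) hCm0
          calc ((n:ℝ) + w.re) ^ (-(s.re + k)) ≤ ((n:ℝ) + w.re) ^ (-(σ + k)) :=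
              Real.rpow_le_rpow_of_exponent_le hb1 (by linarith)
            _ ≤ ((n:ℝ)) ^ (-(σ + k)) :=
              Real.rpow_le_rpow_of_nonpos (by linarith) (by linarith) (by linarith)

set_option maxHeartbeats 1000000 in
lemma lerchF_diffAt (w : ℂ) (hw : 0 < w.re) (θ : ℂ) (hθ : ‖θ‖ = 1)
    (k : ℕ) (s₀ : ℂ) (hs₀ : 1 < s₀.re + k) :
    DifferentiableAt ℂ (lerchF w θ k) s₀ := by
  have hσ2 : 1 < (s₀.re + (1 - (k:ℝ)))/2 + k := by linarith
  have hU : IsOpen ({s : ℂ | (s₀.re + (1 - (k:ℝ)))/2 < s.re} ∩ {s : ℂ | ‖s‖ < ‖s₀‖ + 1}) :=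
    (isOpen_lt continuous_const Complex.continuous_re).inter
      (isOpen_lt continuous_norm continuous_const)
  have hs₀U : s₀ ∈ ({s : ℂ | (s₀.re + (1 - (k:ℝ)))/2 < s.re} ∩ {s : ℂ | ‖s‖ < ‖s₀‖ + 1}) := by
    constructor
    · show (s₀.re + (1 - (k:ℝ)))/2 < s₀.re
      linarith
    · show ‖s₀‖ < ‖s₀‖ + 1
      linarith
  have hdOn := lerchF_tsum_diffOn w hw θ hθ k ((s₀.re + (1 - (k:ℝ)))/2) (‖s₀‖+1) hσ2
  have ht : DifferentiableAt ℂ (fun s => ∑' n : ℕ, θ^n * lerchG w k n s) s₀ :=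
    hdOn.differentiableAt (hU.mem_nhds hs₀U)
  show DifferentiableAt ℂ (fun s => (∑ j ∈ Finset.range k, (-θ / (1-θ))^j / (1-θ) * lerchG w j 0 s)
    + (-θ/(1-θ))^k * ∑' n : ℕ, θ^n * lerchG w k n s) s₀
  apply DifferentiableAt.add
  · apply DifferentiableAt.fun_sum
    intro j _
    exact ((lerchG_differentiable w hw j (le_refl (0:ℝ))) s₀).const_mul _
  · exact ht.const_mul _

set_option maxHeartbeats 1000000 in
theorem lerch_zeta_entire (w : ℂ) (hw : 0 < w.re) (θ : ℂ) (hθ : ‖θ‖ = 1) (hθ1 : θ ≠ 1) :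
    ∃ F : ℂ → ℂ, Differentiable ℂ F ∧
      ∀ s : ℂ, 1 < s.re → F s = ∑' n : ℕ, θ ^ n * ((n : ℂ) + w) ^ (-s) := by
  refine ⟨fun s => lerchF w θ (⌈2 - s.re⌉₊ + 1) s, ?_, ?_⟩
  · intro s₀
    have hk₀ : (3:ℝ) - s₀.re ≤ ((⌈2 - s₀.re⌉₊ + 1 : ℕ):ℝ) := by
      have := Nat.le_ceil (2 - s₀.re)
      push_cast
      linarith
    have hdiff : DifferentiableAt ℂ (lerchF w θ (⌈2 - s₀.re⌉₊ + 1)) s₀ :=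
      lerchF_diffAt w hw θ hθ (⌈2 - s₀.re⌉₊ + 1) s₀ (by linarith)
    have hEq : (fun s => lerchF w θ (⌈2 - s.re⌉₊ + 1) s)
        =ᶠ[nhds s₀] lerchF w θ (⌈2 - s₀.re⌉₊ + 1) := by
      have hV : {s : ℂ | s₀.re - 1/2 < s.re} ∈ nhds s₀ := by
        apply IsOpen.mem_nhds (isOpen_lt continuous_const Complex.continuous_re)
        show s₀.re - 1/2 < s₀.re
        linarith
      filter_upwards [hV] with s hs
      have hs' : s₀.re - 1/2 < s.re := hs
      have h1 : 1 < s.re + ((⌈2 - s.re⌉₊ + 1 : ℕ):ℝ) := by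
        have := Nat.le_ceil (2 - s.re)
        push_cast
        linarith
      have h2 : 1 < s.re + ((⌈2 - s₀.re⌉₊ + 1 : ℕ):ℝ) := by linarith
      calc lerchF w θ (⌈2 - s.re⌉₊ + 1) s
          = lerchF w θ (max (⌈2 - s.re⌉₊ + 1) (⌈2 - s₀.re⌉₊ + 1)) s :=
            lerchF_eq w hw θ hθ hθ1 (le_max_left _ _) s h1
        _ = lerchF w θ (⌈2 - s₀.re⌉₊ + 1) s :=
            (lerchF_eq w hw θ hθ hθ1 (le_max_right _ _) s h2).symm
    exact (hEq.differentiableAt_iff).2 hdiff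
  · intro s hs
    have h0 : 1 < s.re + ((0:ℕ):ℝ) := by push_cast; linarith
    have heq := lerchF_eq w hw θ hθ hθ1 (Nat.zero_le (⌈2 - s.re⌉₊ + 1)) s h0
    show lerchF w θ (⌈2 - s.re⌉₊ + 1) s = ∑' n : ℕ, θ ^ n * ((n : ℂ) + w) ^ (-s)
    rw [← heq]
    unfold lerchF
    simp only [Finset.range_zero, Finset.sum_empty, pow_zero, one_mul, zero_add]
    refine tsum_congr fun n => ?_
    simp [lerchG]
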